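/- Let D be a closed disk in the complex plane, i.e. D = {z ∈ ℂ : |z - c| ≤ r} for some c ∈ ℂ and r ≥ 0. Then for every positive integer n and all complex numbers z₁, z₂, …, zₙ ∈ D, there exists z ∈ D such that zⁿ = z₁ · z₂ ⋯ zₙ. -/

import Mathlib

open Real Set

lemma gmd_arsinh_deriv (x t : ℝ) :
    HasDerivAt (fun h : ℝ => arsinh (x + h) + arsinh (x - h))
      ((Real.sqrt (1 + (x + t) ^ 2))⁻¹ - (Real.sqrt (1 + (x - t) ^ 2))⁻¹) t := by
  have h1 : HasDerivAt (fun h : ℝ => arsinh (x + h)) ((Real.sqrt (1 + (x + t) ^ 2))⁻¹ * 1) t :=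
    (Real.hasDerivAt_arsinh (x + t)).comp t ((hasDerivAt_id t).const_add x)
  have h2 : HasDerivAt (fun h : ℝ => arsinh (x - h)) ((Real.sqrt (1 + (x - t) ^ 2))⁻¹ * (-1)) t :=
    (Real.hasDerivAt_arsinh (x - t)).comp t ((hasDerivAt_id t).const_sub x)
  have h := h1.add h2
  rw [mul_one, mul_neg_one, ← sub_eq_add_neg] at h
  exact h

lemma gmd_arsinh_pair_nonneg (x : ℝ) (hx : 0 ≤ x) (h : ℝ) (hh : 0 ≤ h) :
    arsinh (x + h) + arsinh (x - h) ≤ 2 * arsinh x := by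
  set F : ℝ → ℝ := fun h => arsinh (x + h) + arsinh (x - h) with hF
  have hanti : AntitoneOn F (Ici (0:ℝ)) := by
    apply antitoneOn_of_deriv_nonpos (convex_Ici 0)
    · exact (Real.continuous_arsinh.comp (continuous_const.add continuous_id)).add
        (Real.continuous_arsinh.comp (continuous_const.sub continuous_id)) |>.continuousOn
    · intro t ht
      exact (gmd_arsinh_deriv x t).differentiableAt.differentiableWithinAt
    · intro t ht
      rw [interior_Ici] at ht
      rw [(gmd_arsinh_deriv x t).deriv]
      have h1 : Real.sqrt (1 + (x - t) ^ 2) ≤ Real.sqrt (1 + (x + t) ^ 2) := by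
        apply Real.sqrt_le_sqrt; nlinarith [le_of_lt (mem_Ioi.mp ht)]
      have h2 : 0 < Real.sqrt (1 + (x - t) ^ 2) := by positivity
      have := inv_anti₀ h2 h1
      linarith
  have h0 : F h ≤ F 0 := hanti (self_mem_Ici) hh hh
  simp only [hF, add_zero, sub_zero] at h0; linarith

lemma gmd_arsinh_pair (x h : ℝ) :
    arsinh (x + h) + arsinh (x - h) ≤ 2 * arsinh |x| := by
  rcases le_total 0 x with hx | hx
  · rw [abs_of_nonneg hx]
    rcases le_total 0 h with hh | hh
    · exact gmd_arsinh_pair_nonneg x hx h hh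
    · have := gmd_arsinh_pair_nonneg x hx (-h) (by linarith)
      simp only [← sub_eq_add_neg, sub_neg_eq_add] at this
      linarith
  · have h1 : arsinh (x + h) ≤ arsinh (h - x) := by
      rw [Real.arsinh_le_arsinh]; linarith
    have h2 : arsinh (h - x) = - arsinh (x - h) := by
      rw [← Real.arsinh_neg]; ring_nf
    have h3 : 0 ≤ arsinh |x| := by
      rw [← Real.arsinh_zero, Real.arsinh_le_arsinh]; positivity
    linarith

lemma gmd_pair_cos (a : ℝ) (ha : 0 ≤ a) (y₁ y₂ : ℝ) :
    ∃ (φ : ℝ) (m : ℤ), 2 * φ = y₁ + y₂ + 2 * π * m ∧ 0 ≤ Real.cos φ ∧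
      arsinh (a * Real.cos y₁) + arsinh (a * Real.cos y₂) ≤ 2 * arsinh (a * Real.cos φ) := by
  set Y := (y₁ + y₂) / 2 with hY
  set D := (y₁ - y₂) / 2 with hD
  have e1 : y₁ = Y + D := by rw [hY, hD]; ring
  have e2 : y₂ = Y - D := by rw [hY, hD]; ring
  have c1 : a * Real.cos y₁ = a * (Real.cos Y * Real.cos D) + (- (a * (Real.sin Y * Real.sin D))) := by
    rw [e1, Real.cos_add]; ring
  have c2 : a * Real.cos y₂ = a * (Real.cos Y * Real.cos D) - (- (a * (Real.sin Y * Real.sin D))) := by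
    rw [e2, Real.cos_sub]; ring
  have key : arsinh (a * Real.cos y₁) + arsinh (a * Real.cos y₂)
      ≤ 2 * arsinh |a * (Real.cos Y * Real.cos D)| := by
    rw [c1, c2]; exact gmd_arsinh_pair _ _
  have habs : |a * (Real.cos Y * Real.cos D)| ≤ a * |Real.cos Y| := by
    rw [abs_mul, abs_of_nonneg ha, abs_mul]
    have : |Real.cos D| ≤ 1 := Real.abs_cos_le_one D
    nlinarith [abs_nonneg (Real.cos Y), abs_nonneg (Real.cos D), mul_nonneg ha (abs_nonneg (Real.cos Y))]
  have key2 : arsinh (a * Real.cos y₁) + arsinh (a * Real.cos y₂)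
      ≤ 2 * arsinh (a * |Real.cos Y|) := by
    have := (Real.arsinh_le_arsinh (x := |a * (Real.cos Y * Real.cos D)|)
      (y := a * |Real.cos Y|)).2 habs
    linarith
  rcases le_total 0 (Real.cos Y) with hc | hc
  · exact ⟨Y, 0, by push_cast; ring, hc, by rwa [abs_of_nonneg hc] at key2⟩
  · refine ⟨Y + π, 1, by push_cast; ring, ?_, ?_⟩
    · rw [Real.cos_add_pi]; linarith
    · rw [Real.cos_add_pi]; rwa [abs_of_nonpos hc] at key2

lemma gmd_arsinh_concave : ConcaveOn ℝ (Ici (0:ℝ)) arsinh := by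
  apply AntitoneOn.concaveOn_of_deriv (convex_Ici 0) Real.continuous_arsinh.continuousOn
    (Real.differentiable_arsinh.differentiableOn)
  intro s hs t ht hst
  rw [interior_Ici] at hs ht
  rw [(Real.hasDerivAt_arsinh s).deriv, (Real.hasDerivAt_arsinh t).deriv]
  apply inv_anti₀ (by positivity)
  apply Real.sqrt_le_sqrt
  nlinarith [(mem_Ioi.mp hs).le, (mem_Ioi.mp ht).le]

lemma gmd_cos_concave : ConcaveOn ℝ (Icc (-(π/2)) (π/2)) Real.cos :=
  strictConcaveOn_cos_Icc.concaveOn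

lemma gmd_A_concave (a : ℝ) (ha : 0 ≤ a) :
    ConcaveOn ℝ (Icc (-(π/2)) (π/2)) (fun y => arsinh (a * Real.cos y)) := by
  constructor
  · exact convex_Icc _ _
  · intro u hu v hv s t hs ht hst
    have hcu : 0 ≤ Real.cos u := Real.cos_nonneg_of_mem_Icc (by simpa using hu)
    have hcv : 0 ≤ Real.cos v := Real.cos_nonneg_of_mem_Icc (by simpa using hv)
    have step1 : s * Real.cos u + t * Real.cos v ≤ Real.cos (s • u + t • v) :=
      gmd_cos_concave.2 hu hv hs ht hst
    have step2 : arsinh (a * (s * Real.cos u + t * Real.cos v))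
        ≤ arsinh (a * Real.cos (s • u + t • v)) := by
      rw [Real.arsinh_le_arsinh]
      exact mul_le_mul_of_nonneg_left step1 ha
    have step3 : s • arsinh (a * Real.cos u) + t • arsinh (a * Real.cos v)
        ≤ arsinh (s • (a * Real.cos u) + t • (a * Real.cos v)) := by
      apply gmd_arsinh_concave.2 _ _ hs ht hst
      · exact mul_nonneg ha hcu
      · exact mul_nonneg ha hcv
    have e : s • (a * Real.cos u) + t • (a * Real.cos v) = a * (s * Real.cos u + t * Real.cos v) := by
      simp [smul_eq_mul]; ring
    rw [e] at step3
    exact step3.trans step2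

lemma gmd_rep (y : ℝ) : ∃ (m : ℤ) (t : ℝ), y = t + 2 * π * m ∧ |t| ≤ π ∧ Real.cos t = Real.cos y := by
  refine ⟨round (y / (2 * π)), y - 2 * π * round (y / (2 * π)), by ring, ?_, ?_⟩
  · have h1 : |y / (2 * π) - round (y / (2 * π))| ≤ 1 / 2 := abs_sub_round _
    have h2 : (0:ℝ) < 2 * π := by positivity
    have h3 : y - 2 * π * round (y / (2 * π)) = (2 * π) * (y / (2 * π) - round (y / (2 * π))) := by
      field_simp
    rw [h3, abs_mul, abs_of_pos h2]
    calc 2 * π * |y / (2 * π) - round (y / (2 * π))| ≤ 2 * π * (1/2) :=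
          mul_le_mul_of_nonneg_left h1 h2.le
      _ = π := by ring
  · have : y - 2 * π * round (y / (2 * π)) = y - (round (y / (2 * π)) : ℤ) * (2 * π) := by ring
    rw [this, Real.cos_sub_int_mul_two_pi]

lemma gmd_rep_half (y : ℝ) (hc : 0 ≤ Real.cos y) :
    ∃ (m : ℤ) (t : ℝ), y = t + 2 * π * m ∧ t ∈ Icc (-(π/2)) (π/2) ∧ Real.cos t = Real.cos y := by
  obtain ⟨m, t, h1, h2, h3⟩ := gmd_rep y
  refine ⟨m, t, h1, ?_, h3⟩
  have hct : 0 ≤ Real.cos t := h3 ▸ hc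
  have habs : |t| ≤ π / 2 := by
    by_contra hgt
    push_neg at hgt
    have h5 : Real.cos |t| < 0 :=
      Real.cos_neg_of_pi_div_two_lt_of_lt hgt (by linarith [Real.pi_pos])
    rw [Real.cos_abs] at h5; linarith
  exact abs_le.mp habs |> fun ⟨h5, h6⟩ => ⟨h5, h6⟩

lemma gmd_sum_update2 {n : ℕ} (f : Fin n → ℝ) (i₀ j : Fin n) (hij : i₀ ≠ j) (v : ℝ) :
    ∑ i, Function.update (Function.update f i₀ v) j v i
      = (∑ i, f i) - f i₀ - f j + 2 * v := by
  rw [Finset.sum_update_of_mem (Finset.mem_univ j)]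
  rw [Finset.sdiff_singleton_eq_erase, Finset.sum_update_of_mem
    (Finset.mem_erase.mpr ⟨hij, Finset.mem_univ i₀⟩)]
  rw [Finset.sdiff_singleton_eq_erase]
  have h1 : f j + ∑ x ∈ Finset.univ.erase j, f x = ∑ x, f x :=
    Finset.add_sum_erase _ f (Finset.mem_univ j)
  have h2 : f i₀ + ∑ x ∈ (Finset.univ.erase j).erase i₀, f x = ∑ x ∈ Finset.univ.erase j, f x :=
    Finset.add_sum_erase _ f (Finset.mem_erase.mpr ⟨hij, Finset.mem_univ i₀⟩)
  linarith

lemma gmd_angle (a : ℝ) (ha : 0 ≤ a) (n : ℕ) (hn : 1 < n) :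
    ∀ (k : ℕ) (y : Fin n → ℝ),
      (Finset.univ.filter fun i => Real.cos (y i) < 0).card ≤ k →
    ∃ (φ : ℝ) (m : ℤ), (n:ℝ) * φ = (∑ i, y i) + 2 * π * m ∧
      ∑ i, arsinh (a * Real.cos (y i)) ≤ n * arsinh (a * Real.cos φ) := by
  have hn0 : (n:ℝ) ≠ 0 := by positivity
  intro k
  induction k with
  | zero =>
    intro y hcard
    have hpos : ∀ i, 0 ≤ Real.cos (y i) := by
      intro i
      by_contra hneg
      push_neg at hneg
      have : i ∈ Finset.univ.filter fun i => Real.cos (y i) < 0 := by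
        simp [hneg]
      have := Finset.card_pos.mpr ⟨i, this⟩
      omega
    choose m t hyt ht hcos using fun i => gmd_rep_half (y i) (hpos i)
    set φ := (∑ i, t i) / n with hφ
    have hw : ∑ _i : Fin n, (n:ℝ)⁻¹ = 1 := by
      rw [Finset.sum_const, Finset.card_univ, Fintype.card_fin, nsmul_eq_mul]
      field_simp
    have hjensen := (gmd_A_concave a ha).le_map_sum (p := t) (w := fun _ => (n:ℝ)⁻¹)
      (fun i _ => by positivity) hw (fun i _ => ht i)
    have hsum_pt : ∑ i, (n:ℝ)⁻¹ • t i = φ := by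
      simp only [smul_eq_mul]
      rw [← Finset.mul_sum, hφ, inv_mul_eq_div]
    have hsum_A : ∑ i, (n:ℝ)⁻¹ • arsinh (a * Real.cos (t i))
        = (n:ℝ)⁻¹ * ∑ i, arsinh (a * Real.cos (t i)) := by
      rw [Finset.mul_sum]; simp [smul_eq_mul]
    rw [hsum_pt, hsum_A] at hjensen
    refine ⟨φ, -∑ i, m i, ?_, ?_⟩
    · rw [hφ]
      have h1 : ∑ i, y i = ∑ i, t i + 2 * π * (∑ i, (m i : ℝ)) := by
        rw [Finset.mul_sum, ← Finset.sum_add_distrib]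
        exact Finset.sum_congr rfl fun i _ => by rw [hyt i]
      have h2 : (n:ℝ) * ((∑ i, t i) / n) = ∑ i, t i := by field_simp
      push_cast
      linarith
    · have : ∑ i, arsinh (a * Real.cos (y i)) = ∑ i, arsinh (a * Real.cos (t i)) :=
        Finset.sum_congr rfl fun i _ => by rw [hcos i]
      rw [this]
      calc ∑ i, arsinh (a * Real.cos (t i))
          = (n:ℝ) * ((n:ℝ)⁻¹ * ∑ i, arsinh (a * Real.cos (t i))) := by field_simp
        _ ≤ (n:ℝ) * arsinh (a * Real.cos φ) := by
            apply mul_le_mul_of_nonneg_left hjensen (by positivity)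
  | succ k ih =>
    intro y hcard
    by_cases hk : (Finset.univ.filter fun i => Real.cos (y i) < 0).card ≤ k
    · exact ih y hk
    · push_neg at hk
      have hne : (Finset.univ.filter fun i => Real.cos (y i) < 0).Nonempty := by
        rw [← Finset.card_pos]; omega
      obtain ⟨i₀, hi₀⟩ := hne
      have hi₀neg : Real.cos (y i₀) < 0 := by
        simpa using (Finset.mem_filter.mp hi₀).2
      -- pick j ≠ i₀
      have hj : ∃ j : Fin n, j ≠ i₀ := by
        rcases Nat.eq_zero_or_pos i₀.val with h0 | h0
        · exact ⟨⟨1, hn⟩, fun h => by simp [Fin.ext_iff, h0] at h⟩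
        · exact ⟨⟨0, by omega⟩, fun h => by simp [Fin.ext_iff] at h; omega⟩
      obtain ⟨j, hji⟩ := hj
      obtain ⟨φ₀, m₀, hsum0, hcos0, hpair⟩ := gmd_pair_cos a ha (y i₀) (y j)
      set y' := Function.update (Function.update y i₀ φ₀) j φ₀ with hy'
      have hy'i₀ : y' i₀ = φ₀ := by
        rw [hy', Function.update_of_ne hji.symm, Function.update_self]
      have hy'j : y' j = φ₀ := by rw [hy', Function.update_self]
      have hy'other : ∀ i, i ≠ i₀ → i ≠ j → y' i = y i := by
        intro i h1 h2
        rw [hy', Function.update_of_ne h2, Function.update_of_ne h1]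
      -- card bound
      have hsub : (Finset.univ.filter fun i => Real.cos (y' i) < 0)
          ⊆ (Finset.univ.filter fun i => Real.cos (y i) < 0).erase i₀ := by
        intro i hi
        have hineg : Real.cos (y' i) < 0 := by simpa using (Finset.mem_filter.mp hi).2
        have hii₀ : i ≠ i₀ := by
          intro h; rw [h, hy'i₀] at hineg; linarith
        have hij' : i ≠ j := by
          intro h; rw [h, hy'j] at hineg; linarith
        rw [Finset.mem_erase]
        refine ⟨hii₀, ?_⟩
        rw [Finset.mem_filter]
        rw [hy'other i hii₀ hij'] at hineg
        exact ⟨Finset.mem_univ _, hineg⟩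
      have hcard' : (Finset.univ.filter fun i => Real.cos (y' i) < 0).card ≤ k := by
        have h1 := Finset.card_le_card hsub
        rw [Finset.card_erase_of_mem hi₀] at h1
        omega
      obtain ⟨φ, m, hphi, hA⟩ := ih y' hcard'
      have hsumy' : ∑ i, y' i = (∑ i, y i) + 2 * π * m₀ := by
        rw [hy', gmd_sum_update2 y i₀ j (Ne.symm hji) φ₀]
        linarith
      have hAy' : ∑ i, arsinh (a * Real.cos (y' i))
          ≥ ∑ i, arsinh (a * Real.cos (y i)) := by
        have hcomp : (fun i => arsinh (a * Real.cos (y' i)))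
            = Function.update (Function.update (fun i => arsinh (a * Real.cos (y i))) i₀
                (arsinh (a * Real.cos φ₀))) j (arsinh (a * Real.cos φ₀)) := by
          funext i
          rcases eq_or_ne i j with rfl | h2
          · rw [hy'j, Function.update_self]
          · rw [Function.update_of_ne h2]
            rcases eq_or_ne i i₀ with rfl | h1
            · rw [hy'i₀, Function.update_self]
            · rw [Function.update_of_ne h1, hy'other i h1 h2]
        calc ∑ i, arsinh (a * Real.cos (y i))
            ≤ (∑ i, arsinh (a * Real.cos (y i))) - arsinh (a * Real.cos (y i₀))
              - arsinh (a * Real.cos (y j)) + 2 * arsinh (a * Real.cos φ₀) := by linarith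
          _ = ∑ i, arsinh (a * Real.cos (y' i)) := by
              rw [hcomp, gmd_sum_update2 _ i₀ j (Ne.symm hji) _]
      refine ⟨φ, m + m₀, ?_, by linarith⟩
      rw [hphi, hsumy']
      push_cast
      ring

-- |exp(X + φi) - 1|² = e^X² - 2e^X cos φ + 1
lemma gmd_abs_exp_sq (X φ : ℝ) :
    (‖Complex.exp (X + φ * Complex.I) - 1‖)^2
      = Real.exp X ^ 2 - 2 * Real.exp X * Real.cos φ + 1 := by
  rw [Complex.sq_norm, Complex.normSq_apply]
  have hre : (X + φ * Complex.I : ℂ).re = X := by simp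
  have him : (X + φ * Complex.I : ℂ).im = φ := by simp
  rw [Complex.sub_re, Complex.sub_im, Complex.exp_re, Complex.exp_im, hre, him,
    Complex.one_re, Complex.one_im]
  nlinarith [Real.sin_sq_add_cos_sq φ]

-- |u - 1|² for u ≠ 0 in terms of modulus/argument
lemma gmd_abs_sub_one_sq (u : ℂ) (hu : u ≠ 0) :
    (‖u - 1‖)^2
      = ‖u‖ ^ 2 - 2 * ‖u‖ * Real.cos (Complex.arg u) + 1 := by
  rw [Complex.sq_norm, Complex.normSq_apply, Complex.sub_re, Complex.sub_im,
    Complex.one_re, Complex.one_im]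
  have h1 : ‖u‖ * Real.cos (Complex.arg u) = u.re := Complex.norm_mul_cos_arg u
  have h2 : ‖u‖ ^ 2 = u.re^2 + u.im^2 := by
    rw [Complex.sq_norm, Complex.normSq_apply]; ring
  nlinarith

-- log of u as real/imaginary parts
lemma gmd_log_eq (u : ℂ) :
    Complex.log u = (Real.log (‖u‖) : ℂ) + (Complex.arg u : ℝ) * Complex.I := by
  apply Complex.ext <;> simp [Complex.log_re, Complex.log_im]

-- (exp(X + φI))^n = exp(S + T·I) when nX = S, nφ = T + 2πm
lemma gmd_exp_pow (n : ℕ) (m : ℤ) (X φ S T : ℝ) (hre : (n:ℝ) * X = S)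
    (him : (n:ℝ) * φ = T + 2 * π * m) :
    (Complex.exp (X + φ * Complex.I)) ^ n = Complex.exp (S + T * Complex.I) := by
  rw [← Complex.exp_nat_mul]
  have : (n : ℂ) * (X + φ * Complex.I) = (S + T * Complex.I) + m * (2 * π * Complex.I) := by
    apply Complex.ext
    · push_cast; simp; push_cast at hre ⊢; linarith
    · push_cast; simp; push_cast at him ⊢; linarith
  rw [this, Complex.exp_add, Complex.exp_int_mul_two_pi_mul_I, mul_one]

-- product of nonzero complex numbers as exp of sum of logs
lemma gmd_prod_eq_exp (n : ℕ) (u : Fin n → ℂ) (hu : ∀ i, u i ≠ 0) :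
    ∏ i, u i = Complex.exp ((↑(∑ i, Real.log (‖u i‖)) : ℂ)
      + (↑(∑ i, Complex.arg (u i)) : ℝ) * Complex.I) := by
  have h1 : ∏ i, u i = ∏ i, Complex.exp (Complex.log (u i)) :=
    Finset.prod_congr rfl fun i _ => (Complex.exp_log (hu i)).symm
  rw [h1, ← Complex.exp_sum]
  congr 1
  rw [Finset.sum_congr rfl fun i _ => gmd_log_eq (u i)]
  rw [Finset.sum_add_distrib]
  push_cast
  rw [← Finset.sum_mul]

-- For K > 0: cos y + sqrt(cos y ^2 + K) = sqrt K * exp (arsinh (cos y / sqrt K))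
lemma gmd_sqrtK_exp (K cy : ℝ) (hK : 0 < K) :
    cy + Real.sqrt (cy^2 + K) = Real.sqrt K * Real.exp (arsinh ((Real.sqrt K)⁻¹ * cy)) := by
  have hsK : 0 < Real.sqrt K := Real.sqrt_pos.mpr hK
  rw [Real.exp_arsinh]
  have h1 : Real.sqrt K * Real.sqrt (1 + ((Real.sqrt K)⁻¹ * cy)^2) = Real.sqrt (cy^2 + K) := by
    rw [← Real.sqrt_sq hsK.le]
    rw [← Real.sqrt_mul (by positivity)]
    congr 1
    have : Real.sqrt K ^ 2 = K := Real.sq_sqrt hK.le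
    field_simp
    simp only [Real.sqrt_sq hsK.le, this]; ring
  rw [mul_add, h1]
  field_simp

-- Forward: per-point inequality, case K > 0
lemma gmd_forward (K ρ t cy : ℝ) (hK : 0 < K) (hKρ : K = ρ^2 - 1) (ht : 0 < t)
    (h : t^2 - 2*t*cy + 1 ≤ ρ^2) :
    Real.log t ≤ Real.log (Real.sqrt K) + arsinh ((Real.sqrt K)⁻¹ * cy) := by
  have h1 : (t - cy)^2 ≤ cy^2 + K := by nlinarith
  have h2 : t ≤ cy + Real.sqrt (cy^2 + K) := by
    have := Real.sqrt_le_sqrt h1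
    rw [Real.sqrt_sq_eq_abs] at this
    have := le_abs_self (t - cy)
    linarith
  rw [← Real.log_exp (arsinh ((Real.sqrt K)⁻¹ * cy)),
    ← Real.log_mul (by positivity) (by positivity)]
  apply Real.log_le_log ht
  rw [← gmd_sqrtK_exp K cy hK]
  exact h2

-- Backward: from the mean inequality to the quadratic
lemma gmd_backward (K ρ X cφ : ℝ) (hK : 0 < K) (hKρ : K = ρ^2 - 1)
    (h : X ≤ Real.log (Real.sqrt K) + arsinh ((Real.sqrt K)⁻¹ * cφ)) :
    Real.exp X ^ 2 - 2 * Real.exp X * cφ + 1 ≤ ρ^2 := by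
  set t := Real.exp X with hT
  have hR : (0:ℝ) < cφ + Real.sqrt (cφ^2 + K) := by
    have h1 : |cφ| < Real.sqrt (cφ^2 + K) := by
      rw [← Real.sqrt_sq_eq_abs]
      exact Real.sqrt_lt_sqrt (sq_nonneg _) (by linarith)
    cases abs_lt.mp h1; linarith
  have ht : t ≤ cφ + Real.sqrt (cφ^2 + K) := by
    rw [← Real.log_exp (arsinh ((Real.sqrt K)⁻¹ * cφ)),
      ← Real.log_mul (by positivity) (by positivity)] at h
    calc t = Real.exp X := rfl
      _ ≤ Real.exp (Real.log (Real.sqrt K * Real.exp (arsinh ((Real.sqrt K)⁻¹ * cφ)))) :=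
          Real.exp_le_exp.mpr h
      _ = Real.sqrt K * Real.exp (arsinh ((Real.sqrt K)⁻¹ * cφ)) :=
          Real.exp_log (by positivity)
      _ = cφ + Real.sqrt (cφ^2 + K) := (gmd_sqrtK_exp K cφ hK).symm
  have htpos : 0 < t := Real.exp_pos X
  have hs : Real.sqrt (cφ^2 + K) ^ 2 = cφ^2 + K := Real.sq_sqrt (by positivity)
  have hlow : -(Real.sqrt (cφ^2 + K)) ≤ t - cφ := by
    have : |cφ| ≤ Real.sqrt (cφ^2 + K) := by
      rw [← Real.sqrt_sq_eq_abs]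
      exact Real.sqrt_le_sqrt (by linarith)
    cases abs_le.mp this; linarith
  have hup : t - cφ ≤ Real.sqrt (cφ^2 + K) := by linarith
  have := sq_le_sq' hlow hup
  nlinarith

lemma gmd_convexD (B : ℝ) (hB : 0 ≤ B) :
    ConvexOn ℝ ((univ : Set ℝ) ×ˢ Icc (-(π/2)) (π/2))
      (fun p : ℝ × ℝ => Real.exp p.1 + B * Real.exp (-p.1) - 2 * Real.cos p.2) := by
  set D : Set (ℝ × ℝ) := (univ : Set ℝ) ×ˢ Icc (-(π/2)) (π/2) with hD
  have hDc : Convex ℝ D := convex_univ.prod (convex_Icc _ _)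
  have c1 : ConvexOn ℝ D (fun p : ℝ × ℝ => Real.exp p.1) := by
    have := convexOn_exp.comp_affineMap (LinearMap.fst ℝ ℝ ℝ).toAffineMap
    exact (this.subset (by simp) hDc)
  have c2 : ConvexOn ℝ D (fun p : ℝ × ℝ => B * Real.exp (-p.1)) := by
    have h0 := convexOn_exp.comp_affineMap (-(LinearMap.fst ℝ ℝ ℝ)).toAffineMap
    have h1 := (h0.subset (by simp) hDc).smul hB
    refine h1.congr fun p _ => ?_
    simp [smul_eq_mul]
  have c3 : ConvexOn ℝ D (fun p : ℝ × ℝ => -(2 * Real.cos p.2)) := by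
    have h0 : ConvexOn ℝ (Icc (-(π/2)) (π/2)) (fun y => -Real.cos y) :=
      strictConcaveOn_cos_Icc.concaveOn.neg
    have h1 := h0.comp_affineMap (LinearMap.snd ℝ ℝ ℝ).toAffineMap
    have hset : ((LinearMap.snd ℝ ℝ ℝ).toAffineMap) ⁻¹' (Icc (-(π/2)) (π/2)) = D := by
      ext p; simp [hD]
    rw [hset] at h1
    have h2 := h1.smul (by norm_num : (0:ℝ) ≤ 2)
    refine h2.congr fun p _ => ?_
    simp [smul_eq_mul]
  have hsum := (c1.add c2).add c3
  refine hsum.congr fun p _ => ?_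
  simp [sub_eq_add_neg]

/-- Closed-disk case of Proposition 2: for z₁,…,zₙ in a closed disk D,
there is z ∈ D with zⁿ = z₁⋯zₙ. -/
theorem geometric_mean_closedDisk (c : ℂ) (r : ℝ) (hr : 0 ≤ r)
    (n : ℕ) (hn : 0 < n) (z : Fin n → ℂ)
    (hz : ∀ i, z i ∈ Metric.closedBall c r) :
    ∃ w ∈ Metric.closedBall c r, w ^ n = ∏ i, z i := by
  have hzr : ∀ i, ‖z i - c‖ ≤ r := by
    intro i
    have := hz i
    rwa [Metric.mem_closedBall, Complex.dist_eq] at this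
  -- Case: some z i = 0
  by_cases hz0 : ∃ i, z i = 0
  · obtain ⟨i₀, hi₀⟩ := hz0
    refine ⟨0, ?_, ?_⟩
    · rw [Metric.mem_closedBall, Complex.dist_eq]
      have := hzr i₀
      rwa [hi₀] at this
    · rw [zero_pow hn.ne', eq_comm]
      exact Finset.prod_eq_zero (Finset.mem_univ i₀) hi₀
  push_neg at hz0
  -- Case: n = 1
  rcases Nat.lt_or_ge n 2 with hn1 | hn2
  · have hn1' : n = 1 := by omega
    subst hn1'
    exact ⟨z 0, hz 0, by simp⟩
  have hn2' : 1 < n := hn2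
  have hnR : (0:ℝ) < n := by positivity
  -- Case: c = 0
  by_cases hc : c = 0
  · subst hc
    set P := ∏ i, z i with hP
    have hPne : P ≠ 0 := Finset.prod_ne_zero_iff.mpr fun i _ => hz0 i
    have habsP : ‖P‖ = ∏ i, ‖z i‖ := Complex.norm_prod _ _
    have habsPos : ∀ i, 0 < ‖z i‖ := fun i => by
      simpa [norm_pos_iff] using hz0 i
    have hr0 : 0 < r := lt_of_lt_of_le (habsPos ⟨0, hn⟩) (by simpa using hzr ⟨0, hn⟩)
    have hlogP : Real.log (‖P‖) = ∑ i, Real.log (‖z i‖) := by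
      rw [habsP]
      exact Real.log_prod fun i _ => (habsPos i).ne'
    have hlogle : Real.log (‖P‖) ≤ n * Real.log r := by
      rw [hlogP]
      calc ∑ i, Real.log (‖z i‖) ≤ ∑ _i : Fin n, Real.log r :=
            Finset.sum_le_sum fun i _ =>
              Real.log_le_log (habsPos i) (by simpa using hzr i)
        _ = n * Real.log r := by
            rw [Finset.sum_const, Finset.card_univ, Fintype.card_fin, nsmul_eq_mul]
    set X := Real.log (‖P‖) / n with hX
    set φ := Complex.arg P / n with hφ
    refine ⟨Complex.exp (X + φ * Complex.I), ?_, ?_⟩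
    · rw [Metric.mem_closedBall, Complex.dist_eq, sub_zero, Complex.norm_exp]
      have hre : (↑X + ↑φ * Complex.I : ℂ).re = X := by simp
      rw [hre]
      calc Real.exp X ≤ Real.exp (Real.log r) := by
            apply Real.exp_le_exp.mpr
            rw [hX, div_le_iff₀ hnR]
            linarith [hlogle]
        _ = r := Real.exp_log hr0
    · rw [gmd_exp_pow n 0 X φ (Real.log (‖P‖)) (Complex.arg P)
        (by rw [hX]; field_simp) (by rw [hφ]; push_cast; field_simp; simp)]
      rw [← gmd_log_eq P, Complex.exp_log hPne]
  -- Main case : c ≠ 0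
  have hcabs : 0 < ‖c‖ := by simpa [norm_pos_iff] using hc
  set ρ := r / ‖c‖ with hρ
  have hρ0 : 0 ≤ ρ := by positivity
  set u := fun i => z i / c with hu
  have hune : ∀ i, u i ≠ 0 := fun i => div_ne_zero (hz0 i) hc
  have huabs : ∀ i, 0 < ‖u i‖ := fun i => by
    simpa [norm_pos_iff] using hune i
  have hu1 : ∀ i, ‖u i - 1‖ ≤ ρ := by
    intro i
    have he : u i - 1 = (z i - c) / c := by
      rw [hu]; field_simp
    rw [he, norm_div, hρ]
    exact div_le_div_of_nonneg_right (hzr i) hcabs.le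
  set x := fun i => Real.log (‖u i‖) with hx
  set y := fun i => Complex.arg (u i) with hy
  have hexp : ∀ i, Real.exp (x i) = ‖u i‖ := fun i => Real.exp_log (huabs i)
  have quad : ∀ i, Real.exp (x i) ^ 2 - 2 * Real.exp (x i) * Real.cos (y i) + 1 ≤ ρ^2 := by
    intro i
    have h1 : (‖u i - 1‖)^2 ≤ ρ^2 :=
      pow_le_pow_left₀ (norm_nonneg _) (hu1 i) 2
    rw [gmd_abs_sub_one_sq (u i) (hune i)] at h1
    rw [hexp i]
    exact h1
  have key : ∃ (X φ : ℝ) (m : ℤ), (n:ℝ) * X = (∑ i, x i) ∧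
      (n:ℝ) * φ = (∑ i, y i) + 2 * π * m ∧
      Real.exp X ^ 2 - 2 * Real.exp X * Real.cos φ + 1 ≤ ρ^2 := by
    rcases le_or_gt ρ 1 with hρ1 | hρ1
    · -- convex case
      set B := 1 - ρ^2 with hB
      have hB0 : 0 ≤ B := by nlinarith
      have ymem : ∀ i, y i ∈ Icc (-(π/2)) (π/2) := by
        intro i
        have hcospos : 0 < (u i).re := by
          have h1 := quad i
          have h2 : Real.exp (x i) * Real.cos (y i) = (u i).re := by
            rw [hexp i, hy]; exact Complex.norm_mul_cos_arg (u i)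
          nlinarith [Real.exp_pos (x i), hexp i, huabs i]
        have := Complex.abs_arg_lt_pi_div_two_iff.mpr (Or.inl hcospos)
        have h3 := abs_le.mp this.le
        exact ⟨h3.1, h3.2⟩
      set p := fun i => ((x i, y i) : ℝ × ℝ) with hp
      have hw : ∑ _i : Fin n, (n:ℝ)⁻¹ = 1 := by
        rw [Finset.sum_const, Finset.card_univ, Fintype.card_fin, nsmul_eq_mul]
        field_simp
      have hjensen := (gmd_convexD B hB0).map_sum_le (p := p) (w := fun _ => (n:ℝ)⁻¹)
        (fun i _ => by positivity) hw
        (fun i _ => by exact ⟨trivial, ymem i⟩)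
      set X := (∑ i, x i) / n with hX
      set Y := (∑ i, y i) / n with hY
      have hsum_p : ∑ i, (n:ℝ)⁻¹ • p i = (X, Y) := by
        apply Prod.ext
        · simp only [Prod.fst_sum, Prod.smul_fst, hp, smul_eq_mul]
          rw [← Finset.mul_sum, hX]
          ring
        · simp only [Prod.snd_sum, Prod.smul_snd, hp, smul_eq_mul]
          rw [← Finset.mul_sum, hY]
          ring
      have hfpt : ∀ i, Real.exp (p i).1 + B * Real.exp (-(p i).1) - 2 * Real.cos (p i).2 ≤ 0 := by
        intro i
        have h1 := quad i
        have hpos := Real.exp_pos (x i)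
        have hmul : Real.exp (x i) * (Real.exp (x i))⁻¹ = 1 := mul_inv_cancel₀ hpos.ne'
        simp only [hp]
        show Real.exp (x i) + B * Real.exp (-(x i)) - 2 * Real.cos (y i) ≤ 0
        rw [Real.exp_neg]
        nlinarith [hpos]
      have hrhs : ∑ i, (n:ℝ)⁻¹ • (Real.exp (p i).1 + B * Real.exp (-(p i).1)
          - 2 * Real.cos (p i).2) ≤ 0 := by
        apply Finset.sum_nonpos
        intro i _
        have h0 := hfpt i
        have h1 : (0:ℝ) ≤ (n:ℝ)⁻¹ := by positivity
        simp only [smul_eq_mul]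
        exact mul_nonpos_of_nonneg_of_nonpos h1 h0
      rw [hsum_p] at hjensen
      have hXY := hjensen.trans hrhs
      refine ⟨X, Y, 0, by rw [hX]; field_simp, by rw [hY]; push_cast; field_simp; simp, ?_⟩
      have hpos := Real.exp_pos X
      have hinv : Real.exp (-X) = (Real.exp X)⁻¹ := Real.exp_neg _
      have hmul : Real.exp X * (Real.exp X)⁻¹ = 1 := mul_inv_cancel₀ hpos.ne'
      simp only at hXY
      rw [hinv] at hXY
      nlinarith [hpos]
    · -- arcsinh case
      set K := ρ^2 - 1 with hK
      have hK0 : 0 < K := by nlinarith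
      set a := (Real.sqrt K)⁻¹ with ha
      have ha0 : 0 ≤ a := by positivity
      have hfor : ∀ i, x i ≤ Real.log (Real.sqrt K) + arsinh (a * Real.cos (y i)) := by
        intro i
        have := gmd_forward K ρ (Real.exp (x i)) (Real.cos (y i)) hK0 hK
          (Real.exp_pos _) (quad i)
        rwa [Real.log_exp] at this
      obtain ⟨φ, m, hφ, hAsum⟩ := gmd_angle a ha0 n hn2' n y
        (le_trans (Finset.card_filter_le _ _) (by simp))
      refine ⟨(∑ i, x i) / n, φ, m, by field_simp, hφ, ?_⟩
      apply gmd_backward K ρ _ _ hK0 hK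
      have h1 : ∑ i, x i ≤ (n:ℝ) * Real.log (Real.sqrt K) + ∑ i, arsinh (a * Real.cos (y i)) := by
        calc ∑ i, x i ≤ ∑ i, (Real.log (Real.sqrt K) + arsinh (a * Real.cos (y i))) :=
              Finset.sum_le_sum fun i _ => hfor i
          _ = (n:ℝ) * Real.log (Real.sqrt K) + ∑ i, arsinh (a * Real.cos (y i)) := by
              rw [Finset.sum_add_distrib, Finset.sum_const, Finset.card_univ,
                Fintype.card_fin, nsmul_eq_mul]
      have h2 : ∑ i, x i ≤ (n:ℝ) * (Real.log (Real.sqrt K) + arsinh (a * Real.cos φ)) := by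
        have := hAsum
        nlinarith [h1, hAsum]
      rw [div_le_iff₀ hnR]
      linarith [h2]
  obtain ⟨X, φ, m, hX, hφ, hquad⟩ := key
  set v := Complex.exp (↑X + ↑φ * Complex.I) with hv
  have hvn : v ^ n = ∏ i, u i := by
    rw [hv, gmd_exp_pow n m X φ (∑ i, x i) (∑ i, y i) hX hφ, gmd_prod_eq_exp n u hune]
  have hv1 : ‖v - 1‖ ≤ ρ := by
    have h1 : (‖v - 1‖)^2 ≤ ρ^2 := by
      rw [hv, gmd_abs_exp_sq X φ]
      exact hquad
    nlinarith [norm_nonneg (v - 1), hρ0]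
  refine ⟨c * v, ?_, ?_⟩
  · rw [Metric.mem_closedBall, Complex.dist_eq]
    have he : c * v - c = c * (v - 1) := by ring
    rw [he, norm_mul]
    calc ‖c‖ * ‖v - 1‖ ≤ ‖c‖ * ρ :=
          mul_le_mul_of_nonneg_left hv1 (norm_nonneg c)
      _ = r := by rw [hρ]; field_simp
  · rw [mul_pow, hvn]
    have he : ∏ i, z i = ∏ i, (c * u i) := by
      apply Finset.prod_congr rfl
      intro i _
      rw [hu]
      field_simp
    rw [he, Finset.prod_mul_distrib, Finset.prod_const, Finset.card_univ, Fintype.card_fin]
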